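/- Let (A, p, 0, ½, 1) be a mobi algebra. Then for all a, b, c, d ∈ A: (1) p(a, p(0,c,d), b) = p(a, c, p(a,d,b)); (2) p(a, p(1,c,d), b) = p(b, c, p(a,d,b)); (3) p(a, p(c,d,0), b) = p(p(a,c,b), d, a); (4) p(a, p(c,d,1), b) = p(p(a,c,b), d, b). -/
import Mathlib

/-- A mobi algebra: a set with a ternary operation `p` and constants `e0`, `half`, `e1`. -/
structure MobiAlgebra (A : Type*) where
  p : A → A → A → A
  e0 : A
  half : A
  e1 : A
  A1 : p e1 half e0 = half
  A2 : ∀ a, p e0 a e1 = a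
  A3 : ∀ a b, p a b a = a
  A4 : ∀ a b, p a e0 b = a
  A5 : ∀ a b, p a e1 b = b
  A6 : ∀ a a' b, p a half b = p a' half b → a = a'
  A7 : ∀ a b c1 c2 c3, p a (p c1 c2 c3) b = p (p a c1 b) c2 (p a c3 b)
  A8 : ∀ a1 a2 b1 b2 c,
    p (p a1 c b1) half (p a2 c b2) = p (p a1 half a2) c (p b1 half b2)

/-- Proposition 2.2: basic properties (P11)-(P14) of a mobi algebra. -/
theorem mobi_prop_p1 {A : Type*} (M : MobiAlgebra A) (a b c d : A) :
    M.p a (M.p M.e0 c d) b = M.p a c (M.p a d b) ∧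
    M.p a (M.p M.e1 c d) b = M.p b c (M.p a d b) ∧
    M.p a (M.p c d M.e0) b = M.p (M.p a c b) d a ∧
    M.p a (M.p c d M.e1) b = M.p (M.p a c b) d b := by
  refine ⟨?_, ?_, ?_, ?_⟩ <;> rw [M.A7] <;> simp [M.A4, M.A5]
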